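/- The class of pattern languages over a countably infinite name alphabet N is closed under concatenation: for pattern languages L(k₁, φ₁) and L(k₂, φ₂), the concatenation { u ++ v | u ∈ L(k₁, φ₁), v ∈ L(k₂, φ₂) } equals the pattern language L(k₁ + k₂, ψ), where ψ is the conjunction of φ₁ applied to the first k₁ positions and φ₂ applied (with indices shifted by k₁) to the last k₂ positions. (This is the core correctness fact behind the language-calculus rule for concatenation of schematic words.) -/

import Mathlib

/-- Freshness conditions over `k` positions with names from `N`: finite
conjunctions (`tru` is the empty conjunction) and disjunctions of atomic
constraints `x i ≠ x j` and `x i ≠ n`. -/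
inductive Fresh (N : Type) (k : ℕ) : Type where
  | tru : Fresh N k
  | neVar : Fin k → Fin k → Fresh N k
  | neConst : Fin k → N → Fresh N k
  | and : Fresh N k → Fresh N k → Fresh N k
  | or : Fresh N k → Fresh N k → Fresh N k

/-- Satisfaction of a freshness condition by an assignment of names. -/
def Fresh.sat {N : Type} {k : ℕ} : Fresh N k → (Fin k → N) → Prop
  | .tru, _ => True
  | .neVar i j, x => x i ≠ x j
  | .neConst i n, x => x i ≠ n
  | .and φ ψ, x => φ.sat x ∧ ψ.sat x
  | .or φ ψ, x => φ.sat x ∨ ψ.sat x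

/-- Reindexing a freshness condition along a map of positions. -/
def Fresh.reindex {N : Type} {k m : ℕ} (f : Fin k → Fin m) : Fresh N k → Fresh N m
  | .tru => .tru
  | .neVar i j => .neVar (f i) (f j)
  | .neConst i n => .neConst (f i) n
  | .and φ ψ => .and (φ.reindex f) (ψ.reindex f)
  | .or φ ψ => .or (φ.reindex f) (ψ.reindex f)

/-- The pattern language of a freshness condition: all words of length `k`
whose entries satisfy `φ`. -/
def patLang {N : Type} (k : ℕ) (φ : Fresh N k) : Set (List N) :=
  { w | ∃ x : Fin k → N, w = List.ofFn x ∧ φ.sat x }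

theorem patLang_concat {N : Type} [Countable N] [Infinite N]
    (k₁ k₂ : ℕ) (φ₁ : Fresh N k₁) (φ₂ : Fresh N k₂) :
    { w | ∃ u ∈ patLang k₁ φ₁, ∃ v ∈ patLang k₂ φ₂, w = u ++ v } =
      patLang (k₁ + k₂)
        (.and (φ₁.reindex (Fin.castAdd k₂)) (φ₂.reindex (Fin.natAdd k₁))) := by
  have hre : ∀ {k m : ℕ} (φ : Fresh N k) (f : Fin k → Fin m) (x : Fin m → N),
      (φ.reindex f).sat x ↔ φ.sat (x ∘ f) := by
    intro k m φ f x
    induction φ with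
    | tru => simp [Fresh.reindex, Fresh.sat]
    | neVar i j => simp [Fresh.reindex, Fresh.sat]
    | neConst i n => simp [Fresh.reindex, Fresh.sat]
    | and φ ψ ih1 ih2 => simp [Fresh.reindex, Fresh.sat, ih1, ih2]
    | or φ ψ ih1 ih2 => simp [Fresh.reindex, Fresh.sat, ih1, ih2]
  ext w
  constructor
  · rintro ⟨u, ⟨x₁, rfl, h₁⟩, v, ⟨x₂, rfl, h₂⟩, rfl⟩
    refine ⟨Fin.append x₁ x₂, ?_, ?_, ?_⟩
    · rw [List.ofFn_add]
      simp [Fin.append_left, Fin.append_right]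
    · rw [hre]
      have : (Fin.append x₁ x₂) ∘ (Fin.castAdd k₂) = x₁ := by
        funext i; simp [Fin.append_left]
      rw [this]; exact h₁
    · rw [hre]
      have : (Fin.append x₁ x₂) ∘ (Fin.natAdd k₁) = x₂ := by
        funext i; simp [Fin.append_right]
      rw [this]; exact h₂
  · rintro ⟨x, rfl, h₁, h₂⟩
    rw [hre] at h₁
    rw [hre] at h₂
    exact ⟨_, ⟨_, rfl, h₁⟩, _, ⟨_, rfl, h₂⟩, (List.ofFn_add (f := x)).symm ▸ rfl⟩
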